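/- Let G be a normed abelian group, g ∈ G, ε > 0 with |a|+|b| ≥ |g|+ε for all nonzero a,b with a+b = g. Let (Ω, μ) be a measure space and γ : Ω × ℕ → G a measurable multiplicity function such that for μ-a.e. x, the finite sum ∑_n γ(x,n) equals g and γ(x,n) ∉ {g, -g} for all n (with γ(x,n) = 0 for all but finitely many n). Then ∫_Ω ∑_n |γ(x,n)| dμ(x) ≥ (|g|+ε) · μ(Ω). -/
import Mathlib


open MeasureTheory

/-- Measure-theoretic core of the projection lemma. If for a.e. `x`
the multiplicities `γ (x, n)` (finitely many nonzero, none equal to `g` or `-g`)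
sum to `g`, then the total mass `∫ ∑_n |γ(x,n)| dμ` is at least `(|g|+ε)·μ(Ω)`. -/
theorem stmt6 {G : Type*} [AddCommGroup G] [MeasurableSpace G] (nrm : G → ℝ)
    (h_nonneg : ∀ x, 0 ≤ nrm x)
    (h_zero : ∀ x, nrm x = 0 ↔ x = 0)
    (h_neg : ∀ x, nrm (-x) = nrm x)
    (h_add : ∀ x y, nrm (x + y) ≤ nrm x + nrm y)
    (g : G) (ε : ℝ) (hε : 0 < ε)
    (hstrong : ∀ a b : G, a ≠ 0 → b ≠ 0 → a + b = g → nrm g + ε ≤ nrm a + nrm b)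
    {Ω : Type*} [MeasurableSpace Ω] (μ : Measure Ω)
    (γ : Ω × ℕ → G) (hmeas : Measurable γ)
    (hae : ∀ᵐ x ∂μ, ({n : ℕ | γ (x, n) ≠ 0}).Finite ∧
      (∑ᶠ n : ℕ, γ (x, n)) = g ∧ ∀ n : ℕ, γ (x, n) ≠ g ∧ γ (x, n) ≠ -g) :
    ENNReal.ofReal (nrm g + ε) * μ Set.univ ≤
      ∫⁻ x, ∑' n : ℕ, ENNReal.ofReal (nrm (γ (x, n))) ∂μ := by
  have hnrm0 : nrm 0 = 0 := (h_zero 0).mpr rfl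
  have htri : ∀ (f : ℕ → G) (s : Finset ℕ),
      nrm (∑ n ∈ s, f n) ≤ ∑ n ∈ s, nrm (f n) := by
    intro f s
    induction s using Finset.cons_induction with
    | empty => simp [hnrm0]
    | cons a s ha ih =>
      rw [Finset.sum_cons, Finset.sum_cons]
      exact (h_add _ _).trans (by linarith)
  have key : ∀ᵐ x ∂μ, ENNReal.ofReal (nrm g + ε)
      ≤ ∑' n : ℕ, ENNReal.ofReal (nrm (γ (x, n))) := by
    filter_upwards [hae] with x hx
    obtain ⟨hfin, hsum, hne⟩ := hx
    have hg : g ≠ 0 := by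
      intro h
      have hsub : (Set.univ : Set ℕ) ⊆ {n : ℕ | γ (x, n) ≠ 0} :=
        fun n _ => h ▸ (hne n).1
      exact Set.infinite_univ (hfin.subset hsub)
    have hfin' : (Function.support fun n => γ (x, n)).Finite := hfin
    set s : Finset ℕ := hfin'.toFinset with hs
    have hsum' : ∑ n ∈ s, γ (x, n) = g := by
      rw [← finsum_eq_sum _ hfin']; exact hsum
    have hsne : s.Nonempty := by
      rcases Finset.eq_empty_or_nonempty s with h | h
      · exfalso; apply hg; rw [← hsum', h, Finset.sum_empty]
      · exact h
    obtain ⟨n0, hn0⟩ := hsne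
    have ha : γ (x, n0) ≠ 0 := by
      have := hfin'.mem_toFinset.mp hn0
      simpa using this
    have hsplit : γ (x, n0) + ∑ n ∈ s.erase n0, γ (x, n) = g := by
      rw [Finset.add_sum_erase s (fun n => γ (x, n)) hn0]; exact hsum'
    have hb : (∑ n ∈ s.erase n0, γ (x, n)) ≠ 0 := by
      intro h
      apply (hne n0).1
      rw [h, add_zero] at hsplit
      exact hsplit
    have h1 : nrm g + ε ≤ nrm (γ (x, n0)) + nrm (∑ n ∈ s.erase n0, γ (x, n)) :=
      hstrong _ _ ha hb hsplit
    have h2 : nrm (∑ n ∈ s.erase n0, γ (x, n)) ≤ ∑ n ∈ s.erase n0, nrm (γ (x, n)) :=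
      htri _ _
    have h3 : nrm g + ε ≤ ∑ n ∈ s, nrm (γ (x, n)) := by
      rw [← Finset.add_sum_erase s (fun n => nrm (γ (x, n))) hn0]; linarith
    calc ENNReal.ofReal (nrm g + ε) ≤ ENNReal.ofReal (∑ n ∈ s, nrm (γ (x, n))) :=
          ENNReal.ofReal_le_ofReal h3
      _ = ∑ n ∈ s, ENNReal.ofReal (nrm (γ (x, n))) :=
          ENNReal.ofReal_sum_of_nonneg (fun n _ => h_nonneg _)
      _ ≤ ∑' n : ℕ, ENNReal.ofReal (nrm (γ (x, n))) := ENNReal.sum_le_tsum s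
  calc ENNReal.ofReal (nrm g + ε) * μ Set.univ
      = ∫⁻ _, ENNReal.ofReal (nrm g + ε) ∂μ := (lintegral_const _).symm
    _ ≤ _ := lintegral_mono_ae key
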